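/- Let α > 0. Then for every locally finite graph G=(V,E), every vertex v ∈ V, every p ∈ [0,1], and every 0 ≤ t < α²/2, the expectation E_p[|h_p(K_v)| e^{t E_v} 1(α E_v ≤ |h_p(K_v)| < ∞)] is finite. -/

import Mathlib

open MeasureTheory Filter Set
open scoped ENNReal

namespace Percolation

variable {V : Type*}

/-- The graph spanned by the open edges of a configuration `ω : Sym2 V → Bool`. -/
def openGraph (G : SimpleGraph V) (ω : Sym2 V → Bool) : SimpleGraph V where
  Adj u w := G.Adj u w ∧ ω s(u, w) = true
  symm := by
    constructor
    intro u w h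
    exact ⟨h.1.symm, by rw [Sym2.eq_swap]; exact h.2⟩
  loopless := ⟨fun u h => G.loopless.irrefl u h.1⟩

/-- The open cluster of the vertex `v` in the configuration `ω`. -/
def cluster (G : SimpleGraph V) (ω : Sym2 V → Bool) (v : V) : Set V :=
  {u | (openGraph G ω).Reachable v u}

/-- The set `E(S)` of edges of `G` with at least one endpoint in `S`. -/
def touchingEdges (G : SimpleGraph V) (S : Set V) : Set (Sym2 V) :=
  {e | e ∈ G.edgeSet ∧ ∃ u ∈ S, u ∈ e}

/-- The set `E(K_v)` of edges of `G` with at least one endpoint in the cluster of `v`. -/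
def clusterEdges (G : SimpleGraph V) (ω : Sym2 V → Bool) (v : V) : Set (Sym2 V) :=
  touchingEdges G (cluster G ω v)

/-- `μ` is the law of Bernoulli-`p` bond percolation on `G`: it is a probability measure on
configurations under which the states of the edges of `G` are independent, each edge being
open with probability `p`.  (This characterizes `μ` on all events depending only on the states
of the edges of `G`.) -/
def IsBernoulli (G : SimpleGraph V) (p : ℝ) (μ : Measure (Sym2 V → Bool)) : Prop :=
  IsProbabilityMeasure μ ∧
    ∀ s : Finset (Sym2 V), ↑s ⊆ G.edgeSet → ∀ f : Sym2 V → Bool,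
      μ {ω | ∀ e ∈ s, ω e = f e} =
        ENNReal.ofReal (p ^ (s.filter fun e => f e = true).card *
          (1 - p) ^ (s.filter fun e => f e = false).card)

/-- The critical probability of `G`. -/
noncomputable def pc (G : SimpleGraph V) : ℝ :=
  sInf {p : ℝ | 0 ≤ p ∧ p ≤ 1 ∧
    ∀ μ : Measure (Sym2 V → Bool), IsBernoulli G p μ →
      μ {ω | ∃ u : V, (cluster G ω u).Infinite} = 1}

/-- `ζ(p) = -limsup (1/n) log P_p(n ≤ E_v < ∞)`, where `μ` is Bernoulli-`p` percolation. -/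
noncomputable def zeta (G : SimpleGraph V) (v : V) (μ : Measure (Sym2 V → Bool)) : ℝ :=
  - Filter.limsup (fun n : ℕ =>
      Real.log (μ {ω | (n : ℕ∞) ≤ (clusterEdges G ω v).encard ∧
        (clusterEdges G ω v).encard < ⊤}).toReal / (n : ℝ)) Filter.atTop

/-- A graph is (vertex-)transitive if its automorphism group acts transitively. -/
def IsTransitive (G : SimpleGraph V) : Prop :=
  ∀ u w : V, ∃ φ : G ≃g G, φ u = w

/-- A graph is quasi-transitive if its automorphism group has finitely many vertex orbits. -/
def IsQuasiTransitive (G : SimpleGraph V) : Prop :=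
  ∃ S : Finset V, ∀ u : V, ∃ φ : G ≃g G, φ u ∈ S

/-- The volume `∑_{u ∈ K} deg(u)` of a set of vertices. -/
noncomputable def vol (G : SimpleGraph V) (K : Set V) : ℝ :=
  ∑ᶠ u ∈ K, ((G.neighborSet u).ncard : ℝ)

/-- The edge boundary `∂_E K`: edges with exactly one endpoint in `K`. -/
def edgeBoundary (G : SimpleGraph V) (K : Set V) : Set (Sym2 V) :=
  {e | e ∈ G.edgeSet ∧ ∃ u w : V, e = s(u, w) ∧ u ∈ K ∧ w ∉ K}

/-- The Cheeger constant `Φ_E(G)`. -/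
noncomputable def cheeger (G : SimpleGraph V) : ℝ :=
  sInf {r : ℝ | ∃ K : Set V, K.Finite ∧ K.Nonempty ∧
    r = ((edgeBoundary G K).ncard : ℝ) / vol G K}

/-- A graph is nonamenable if its Cheeger constant is positive. -/
def Nonamenable (G : SimpleGraph V) : Prop := 0 < cheeger G

/-- The anchored Cheeger constant `Φ*_E` of (the component of `v` in) `H`, anchored at `v`. -/
noncomputable def anchoredCheeger (H : SimpleGraph V) (v : V) : ℝ :=
  ⨆ n : ℕ, sInf {r : ℝ | ∃ K : Set V, v ∈ K ∧ K.Finite ∧ n ≤ K.ncard ∧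
    (SimpleGraph.induce K H).Connected ∧
    r = ((edgeBoundary H K).ncard : ℝ) / vol H K}

/-- The cluster of `v`, viewed as a subgraph of `G`. -/
def clusterSubgraph (G : SimpleGraph V) (ω : Sym2 V → Bool) (v : V) : G.Subgraph where
  verts := cluster G ω v
  Adj u w := (openGraph G ω).Adj u w ∧ u ∈ cluster G ω v ∧ w ∈ cluster G ω v
  adj_sub h := (show G.Adj _ _ ∧ _ from h.1).1
  edge_vert h := h.2.1
  symm := ⟨fun u w h => ⟨h.1.symm, h.2.2, h.2.1⟩⟩

/-- Membership in `𝓗_v`: finite connected subgraphs of `G` containing `v`. -/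
def HSetMem (G : SimpleGraph V) (v : V) (H : G.Subgraph) : Prop :=
  v ∈ H.verts ∧ H.verts.Finite ∧ H.Connected

/-- `F : 𝓗_v → ℂ` has subexponential growth:
`limsup (1/n) log sup {|F(H)| : H ∈ 𝓗_v, |E(H)| ≤ n} ≤ 0`. -/
def SubexpGrowth (G : SimpleGraph V) (v : V) (F : G.Subgraph → ℂ) : Prop :=
  Filter.limsup (fun n : ℕ =>
    Real.log (sSup {r : ℝ | ∃ H : G.Subgraph, HSetMem G v H ∧
      (touchingEdges G H.verts).ncard ≤ n ∧ r = ‖F H‖}) / (n : ℝ))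
    Filter.atTop ≤ 0

-- The configuration `ω` with the edge `e` opened, i.e. `ω^e`.
open Classical in
noncomputable def updOpen (ω : Sym2 V → Bool) (e : Sym2 V) : Sym2 V → Bool :=
  fun e' => if e' = e then true else ω e'

/-- The fluctuation `h_p(K_v) = p|∂K_v| - (1-p)|E_o(K_v)|` of the cluster of `v`. -/
noncomputable def fluct (G : SimpleGraph V) (p : ℝ) (ω : Sym2 V → Bool) (v : V) : ℝ :=
  p * ({e | e ∈ clusterEdges G ω v ∧ ω e = false}.ncard : ℝ) -
    (1 - p) * ({e | e ∈ clusterEdges G ω v ∧ ω e = true}.ncard : ℝ)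

/-- `Piv(H,v,W)`: edges of `H` whose deletion disconnects `v` from some vertex of `W`. -/
def Piv (H : SimpleGraph V) (v : V) (W : Set V) : Set (Sym2 V) :=
  {e | e ∈ H.edgeSet ∧ ∃ w ∈ W, ¬ (H.deleteEdges {e}).Reachable v w}

/-- `Br_k(K_v, v) = max {|Piv(K_v,v,W)| : W ⊆ K_v, |W| ≤ k}`. -/
noncomputable def Br (G : SimpleGraph V) (ω : Sym2 V → Bool) (v : V) (k : ℕ) : ℕ :=
  sSup {m : ℕ | ∃ W : Finset V, ↑W ⊆ cluster G ω v ∧ W.card ≤ k ∧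
    m = (Piv (openGraph G ω) v ↑W).ncard}

/-- `𝒫_ω(S → ∞)`: the minimal number of edges whose removal disconnects `S` from infinity
in the open subgraph of `ω`. -/
noncomputable def minCut (G : SimpleGraph V) (ω : Sym2 V → Bool) (S : Set V) : ℕ∞ :=
  ⨅ C ∈ {C : Set (Sym2 V) |
    ∀ s ∈ S, {u | ((openGraph G ω).deleteEdges C).Reachable s u}.Finite}, C.encard

/-- `v` is a furcation of `ω`: closing all edges incident to `v` splits the cluster of `v`
into at least three distinct infinite connected components. -/
def IsFurcation (G : SimpleGraph V) (ω : Sym2 V → Bool) (v : V) : Prop :=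
  ∃ u1 u2 u3 : V,
    (openGraph G ω).Adj v u1 ∧ (openGraph G ω).Adj v u2 ∧ (openGraph G ω).Adj v u3 ∧
    ¬ ((openGraph G ω).deleteEdges {e | v ∈ e}).Reachable u1 u2 ∧
    ¬ ((openGraph G ω).deleteEdges {e | v ∈ e}).Reachable u1 u3 ∧
    ¬ ((openGraph G ω).deleteEdges {e | v ∈ e}).Reachable u2 u3 ∧
    {x | ((openGraph G ω).deleteEdges {e | v ∈ e}).Reachable u1 x}.Infinite ∧
    {x | ((openGraph G ω).deleteEdges {e | v ∈ e}).Reachable u2 x}.Infinite ∧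
    {x | ((openGraph G ω).deleteEdges {e | v ∈ e}).Reachable u3 x}.Infinite

-- The `n`-step transition probability of simple random walk on the graph `H`.
open Classical in
noncomputable def walkProb (H : SimpleGraph V) : ℕ → V → V → ℝ
  | 0, u, w => if u = w then 1 else 0
  | n + 1, u, w => ∑ᶠ x ∈ H.neighborSet u, walkProb H n x w / ((H.neighborSet u).ncard : ℝ)

/-- Two vertices are `2`-connected in `H` if they are joined by two edge-disjoint paths. -/
def TwoConn (H : SimpleGraph V) (u w : V) : Prop :=
  ∃ p1 p2 : H.Walk u w, p1.IsPath ∧ p2.IsPath ∧ ∀ e ∈ p1.edges, e ∉ p2.edges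

/-- An edge of `H` is a bridge if deleting it disconnects its endpoints. -/
def IsBridgeOf (H : SimpleGraph V) (e : Sym2 V) : Prop :=
  e ∈ H.edgeSet ∧ ∃ u w : V, e = s(u, w) ∧ ¬ (H.deleteEdges {e}).Reachable u w

/-- `w` represents a leaf of the tree `Tr(K_v)` of `2`-connected components of the cluster of
`v`: it lies in the cluster, its `2`-connected component differs from that of `v`, and exactly
one bridge is incident to its `2`-connected component. -/
def IsTrLeaf (G : SimpleGraph V) (ω : Sym2 V → Bool) (v w : V) : Prop :=
  w ∈ cluster G ω v ∧ ¬ TwoConn (openGraph G ω) v w ∧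
    {e : Sym2 V | IsBridgeOf (openGraph G ω) e ∧
      ∃ x ∈ e, TwoConn (openGraph G ω) x w}.encard = 1

/-- `Lf_k(K_v, v)`: the maximum number of edges in a subgraph of `Tr(K_v)` spanned by the
union of the geodesics between the `2`-connected component of `v` and exactly `k` leaves
(`0` if `Tr(K_v)` has fewer than `k` leaves).  The tree edges of such a spanned subgraph are
exactly the bridges separating `v` from one of the chosen leaf representatives. -/
noncomputable def Lf (G : SimpleGraph V) (ω : Sym2 V → Bool) (v : V) (k : ℕ) : ℕ :=
  sSup {m : ℕ | ∃ w : Fin k → V, (∀ i, IsTrLeaf G ω v (w i)) ∧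
    (∀ i j : Fin k, i ≠ j → ¬ TwoConn (openGraph G ω) (w i) (w j)) ∧
    m = (⋃ i, Piv (openGraph G ω) v {w i}).ncard}

/-- `Q_k(p,n,m)`: the supremum over all countable locally finite graphs `G` and vertices `v`
of `P_p(Lf_k(K_v,v) = m and E_v = n)`. -/
noncomputable def Qk (k : ℕ) (p : ℝ) (n m : ℕ) : ℝ :=
  sSup {r : ℝ | ∃ (W : Type) (_ : Countable W) (G : SimpleGraph W) (v : W),
    (∀ u : W, (G.neighborSet u).Finite) ∧
    ∃ μ : Measure (Sym2 W → Bool), IsBernoulli G p μ ∧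
      r = (μ {ω | Lf G ω v k = m ∧ (clusterEdges G ω v).encard = (n : ℕ∞)}).toReal}

/-- `α(p) = sup {α ∈ [0,p] : α^{-α} (1-α)^{-(1-α)} (p/(1-p))^α < e^{ζ(p)}}`. -/
noncomputable def alphaP (G : SimpleGraph V) (v : V) (p : ℝ)
    (μ : Measure (Sym2 V → Bool)) : ℝ :=
  sSup {α : ℝ | 0 ≤ α ∧ α ≤ p ∧
    α ^ (-α) * (1 - α) ^ (-(1 - α)) * (p / (1 - p)) ^ α < Real.exp (zeta G v μ)}

/-! ### Auxiliary material for Proposition 2.2 -/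

section AuxPercolation

variable {W : Type*} {G : SimpleGraph W} {v : W} {ω ω' : Sym2 W → Bool}

lemma mem_cluster_self (G : SimpleGraph W) (ω : Sym2 W → Bool) (v : W) :
    v ∈ cluster G ω v := SimpleGraph.Reachable.refl v

lemma walk_stays (h : ∀ e ∈ clusterEdges G ω v, ω' e = ω e) :
    ∀ {a b : W}, (openGraph G ω').Walk a b → a ∈ cluster G ω v → b ∈ cluster G ω v := by
  intro a b w
  induction w with
  | nil => exact id
  | @cons u x y hadj q ih =>
    intro hu
    have he : s(u, x) ∈ clusterEdges G ω v := ⟨(show G.Adj u x ∧ ω' s(u, x) = true from hadj).1, u, hu, Sym2.mem_mk_left u x⟩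
    have hopen : ω s(u, x) = true := by rw [← h _ he]; exact (show G.Adj u x ∧ ω' s(u, x) = true from hadj).2
    exact ih (SimpleGraph.Reachable.trans hu (SimpleGraph.Adj.reachable (show G.Adj u x ∧ ω s(u, x) = true from ⟨(show G.Adj u x ∧ ω' s(u, x) = true from hadj).1, hopen⟩)))

lemma walk_reach (h : ∀ e ∈ clusterEdges G ω v, ω' e = ω e) :
    ∀ {a b : W}, (openGraph G ω).Walk a b → a ∈ cluster G ω v →
      (openGraph G ω').Reachable a b := by
  intro a b w
  induction w with
  | nil => exact fun _ => SimpleGraph.Reachable.refl _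
  | @cons u x y hadj q ih =>
    intro hu
    have he : s(u, x) ∈ clusterEdges G ω v := ⟨(show G.Adj u x ∧ ω s(u, x) = true from hadj).1, u, hu, Sym2.mem_mk_left u x⟩
    have hx : x ∈ cluster G ω v :=
      SimpleGraph.Reachable.trans hu (SimpleGraph.Adj.reachable hadj)
    have hadj' : (openGraph G ω').Adj u x := (show G.Adj u x ∧ ω' s(u, x) = true from ⟨(show G.Adj u x ∧ ω s(u, x) = true from hadj).1, by rw [h _ he]; exact (show G.Adj u x ∧ ω s(u, x) = true from hadj).2⟩)
    exact SimpleGraph.Reachable.trans hadj'.reachable (ih hx)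

lemma cluster_stab (h : ∀ e ∈ clusterEdges G ω v, ω' e = ω e) :
    cluster G ω' v = cluster G ω v := by
  ext u
  constructor
  · intro hu
    obtain ⟨w⟩ := (hu : (openGraph G ω').Reachable v u)
    exact walk_stays h w (mem_cluster_self G ω v)
  · intro hu
    obtain ⟨w⟩ := (hu : (openGraph G ω).Reachable v u)
    exact walk_reach h w (mem_cluster_self G ω v)

/-- The boolean configuration determined by a finite set of open edges. -/
noncomputable def indic (o : Finset (Sym2 W)) : Sym2 W → Bool :=
  fun e => @decide (e ∈ o) (Classical.propDecidable _)

@[simp] lemma indic_eq_true_iff (o : Finset (Sym2 W)) (e : Sym2 W) :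
    indic o e = true ↔ e ∈ o := by
  simp [indic]

@[simp] lemma indic_eq_false_iff (o : Finset (Sym2 W)) (e : Sym2 W) :
    indic o e = false ↔ e ∉ o := by
  simp [indic]

/-- `ω` has cluster-edge set `s` with open edges `o`. -/
def Stat (G : SimpleGraph W) (v : W) (s o : Finset (Sym2 W)) (ω : Sym2 W → Bool) : Prop :=
  clusterEdges G ω v = ↑s ∧ ∀ e ∈ s, (ω e = true ↔ e ∈ o)

lemma stat_stab {s o : Finset (Sym2 W)} {ω₀ : Sym2 W → Bool} (h₀ : Stat G v s o ω₀)
    (hω : ∀ e ∈ s, (ω e = true ↔ e ∈ o)) : Stat G v s o ω := by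
  have hagree : ∀ e ∈ clusterEdges G ω₀ v, ω e = ω₀ e := by
    intro e he
    rw [h₀.1, Finset.mem_coe] at he
    rw [Bool.eq_iff_iff, hω e he, h₀.2 e he]
  refine ⟨?_, hω⟩
  rw [clusterEdges, cluster_stab hagree, ← clusterEdges, h₀.1]

lemma fluct_stat {s o : Finset (Sym2 W)} (hos : o ⊆ s) (h : Stat G v s o ω) (p : ℝ) :
    fluct G p ω v = p * ((s.card : ℝ) - o.card) - (1 - p) * o.card := by
  classical
  have htrue : {e | e ∈ clusterEdges G ω v ∧ ω e = true} = (↑o : Set (Sym2 W)) := by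
    ext e
    simp only [Set.mem_setOf_eq, h.1, Finset.mem_coe]
    constructor
    · rintro ⟨hes, het⟩; exact (h.2 e hes).1 het
    · intro heo; exact ⟨hos heo, (h.2 e (hos heo)).2 heo⟩
  have hfalse : {e | e ∈ clusterEdges G ω v ∧ ω e = false} = (↑(s \ o) : Set (Sym2 W)) := by
    ext e
    simp only [Set.mem_setOf_eq, h.1, Finset.mem_coe, Finset.mem_sdiff]
    constructor
    · rintro ⟨hes, hef⟩
      refine ⟨hes, fun heo => ?_⟩
      rw [(h.2 e hes).2 heo] at hef
      exact Bool.noConfusion hef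
    · rintro ⟨hes, heo⟩
      refine ⟨hes, ?_⟩
      cases hb : ω e
      · rfl
      · exact absurd ((h.2 e hes).1 hb) heo
  rw [fluct, htrue, hfalse, Set.ncard_coe_finset, Set.ncard_coe_finset,
    Finset.card_sdiff_of_subset hos, Nat.cast_sub (Finset.card_le_card hos)]

lemma ncard_stat {s o : Finset (Sym2 W)} (h : Stat G v s o ω) :
    (clusterEdges G ω v).ncard = s.card := by
  rw [h.1, Set.ncard_coe_finset]

/-- Valid signatures: data of a possible finite cluster-edge configuration. -/
def ValidSig (G : SimpleGraph W) (v : W) (α p : ℝ) (n m : ℕ) :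
    Set (Finset (Sym2 W) × Finset (Sym2 W)) :=
  {σ | σ.2 ⊆ σ.1 ∧ ↑σ.1 ⊆ G.edgeSet ∧ σ.1.card = n ∧ σ.2.card = m ∧
    α * n ≤ |p * ((n : ℝ) - m) - (1 - p) * m| ∧ ∃ ω₀, Stat G v σ.1 σ.2 ω₀}

lemma sum_pow_weight {X : Type*} (q : ℝ) (E : Finset X) :
    ∑ h ∈ E.powerset, q ^ h.card * (1 - q) ^ (E.card - h.card) = 1 := by
  rw [Finset.sum_powerset_apply_card (fun j => q ^ j * (1 - q) ^ (E.card - j)) (x := E)]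
  have hb := add_pow q (1 - q) E.card
  simp only [add_sub_cancel, one_pow] at hb
  calc ∑ j ∈ Finset.range (E.card + 1), E.card.choose j • (q ^ j * (1 - q) ^ (E.card - j))
      = ∑ j ∈ Finset.range (E.card + 1), q ^ j * (1 - q) ^ (E.card - j) * E.card.choose j := by
        refine Finset.sum_congr rfl fun j _ => ?_
        rw [nsmul_eq_mul]
        ring
    _ = 1 := hb.symm

lemma pack {α p : ℝ} {n m : ℕ} {q : ℝ} (hq0 : 0 ≤ q) (hq1 : q ≤ 1)
    (F : Finset (Finset (Sym2 W) × Finset (Sym2 W)))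
    (hF : ∀ σ ∈ F, σ ∈ ValidSig G v α p n m) :
    (F.card : ℝ) * (q ^ m * (1 - q) ^ (n - m)) ≤ 1 := by
  classical
  set E : Finset (Sym2 W) := F.sup Prod.fst with hE
  have hsub : ∀ σ ∈ F, σ.1 ⊆ E := fun σ hσ => Finset.le_sup (f := Prod.fst) hσ
  set wt : Finset (Sym2 W) → ℝ := fun h => q ^ h.card * (1 - q) ^ (E.card - h.card) with hwt
  have hwt0 : ∀ h, 0 ≤ wt h := fun h =>
    mul_nonneg (pow_nonneg hq0 _) (pow_nonneg (by linarith) _)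
  set cls : (Finset (Sym2 W) × Finset (Sym2 W)) → Finset (Finset (Sym2 W)) :=
    fun σ => E.powerset.filter (fun h => h ∩ σ.1 = σ.2) with hcls
  -- each class sums to exactly the weight
  have hclass : ∀ σ ∈ F, ∑ h ∈ cls σ, wt h = q ^ m * (1 - q) ^ (n - m) := by
    intro σ hσ
    obtain ⟨hos, _, hcard1, hcard2, _, _⟩ := hF σ hσ
    have hsE : σ.1 ⊆ E := hsub σ hσ
    have hsE' : σ.1.card ≤ E.card := Finset.card_le_card hsE
    have key : ∑ h ∈ cls σ, wt h =
        ∑ h' ∈ (E \ σ.1).powerset,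
          (q ^ m * (1 - q) ^ (n - m)) * (q ^ h'.card * (1 - q) ^ ((E \ σ.1).card - h'.card)) := by
      apply Finset.sum_nbij' (i := fun h => h \ σ.1) (j := fun h' => h' ∪ σ.2)
      · intro h hh
        rw [hcls, Finset.mem_filter, Finset.mem_powerset] at hh
        rw [Finset.mem_powerset]
        exact Finset.sdiff_subset_sdiff hh.1 (Finset.Subset.refl _)
      · intro h' hh'
        rw [Finset.mem_powerset] at hh'
        rw [hcls, Finset.mem_filter, Finset.mem_powerset]
        constructor
        · exact Finset.union_subset (hh'.trans Finset.sdiff_subset) (hos.trans hsE)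
        · ext e
          simp only [Finset.mem_inter, Finset.mem_union]
          constructor
          · rintro ⟨he1 | he2, hes⟩
            · exact absurd hes (Finset.mem_sdiff.1 (hh' he1)).2
            · exact he2
          · intro he2
            exact ⟨Or.inr he2, hos he2⟩
      · intro h hh
        rw [hcls, Finset.mem_filter, Finset.mem_powerset] at hh
        ext e
        simp only [Finset.mem_union, Finset.mem_sdiff]
        constructor
        · rintro (⟨heh, _⟩ | heo)
          · exact heh
          · rw [← hh.2] at heo
            exact (Finset.mem_inter.1 heo).1
        · intro heh
          by_cases hes : e ∈ σ.1
          · exact Or.inr (by rw [← hh.2]; exact Finset.mem_inter.2 ⟨heh, hes⟩)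
          · exact Or.inl ⟨heh, hes⟩
      · intro h' hh'
        rw [Finset.mem_powerset] at hh'
        ext e
        simp only [Finset.mem_sdiff, Finset.mem_union]
        constructor
        · rintro ⟨he1 | he2, hes⟩
          · exact he1
          · exact absurd (hos he2) hes
        · intro he1
          exact ⟨Or.inl he1, fun hes => (Finset.mem_sdiff.1 (hh' he1)).2 hes⟩
      · intro h hh
        rw [hcls, Finset.mem_filter, Finset.mem_powerset] at hh
        have hinter : (h ∩ σ.1).card = m := by rw [hh.2, hcard2]
        have hcount : h.card = (h \ σ.1).card + m := by
          rw [← hinter, add_comm]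
          exact (Finset.card_inter_add_card_sdiff h σ.1).symm
        have hsplit : (E \ σ.1).card = E.card - n := by
          rw [Finset.card_sdiff_of_subset hsE, hcard1]
        have hsd : (h \ σ.1).card ≤ (E \ σ.1).card :=
          Finset.card_le_card (Finset.sdiff_subset_sdiff hh.1 (Finset.Subset.refl _))
        have hmn : m ≤ n := by
          rw [← hcard1, ← hcard2]
          exact Finset.card_le_card hos
        have hhE : h.card ≤ E.card := Finset.card_le_card hh.1
        have hnE : n ≤ E.card := by rw [← hcard1]; exact hsE'
        have he1 : E.card - h.card = ((E \ σ.1).card - (h \ σ.1).card) + (n - m) := by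
          omega
        have he2 : E.card - ((h \ σ.1).card + m) = ((E \ σ.1).card - (h \ σ.1).card) + (n - m) := by
          omega
        show q ^ h.card * (1 - q) ^ (E.card - h.card) = _
        rw [hcount, he2, pow_add, pow_add]
        ring
    rw [key, ← Finset.mul_sum, sum_pow_weight, mul_one]
  -- classes are pairwise disjoint
  have hdisj : (↑F : Set _).PairwiseDisjoint cls := by
    intro σ₁ h₁ σ₂ h₂ hne
    show Disjoint (cls σ₁) (cls σ₂)
    rw [Finset.disjoint_left]
    intro h hc1 hc2
    rw [hcls, Finset.mem_filter] at hc1 hc2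
    obtain ⟨_, _, _, _, _, ω₁, hω₁⟩ := hF σ₁ h₁
    obtain ⟨_, _, _, _, _, ω₂, hω₂⟩ := hF σ₂ h₂
    have hs1 : Stat G v σ₁.1 σ₁.2 (indic h) := by
      apply stat_stab hω₁
      intro e he
      rw [indic_eq_true_iff, ← hc1.2, Finset.mem_inter]
      exact ⟨fun hh => ⟨hh, he⟩, fun hh => hh.1⟩
    have hs2 : Stat G v σ₂.1 σ₂.2 (indic h) := by
      apply stat_stab hω₂
      intro e he
      rw [indic_eq_true_iff, ← hc2.2, Finset.mem_inter]
      exact ⟨fun hh => ⟨hh, he⟩, fun hh => hh.1⟩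
    have he1 : σ₁.1 = σ₂.1 :=
      Finset.coe_injective (hs1.1.symm.trans hs2.1)
    have he2 : σ₁.2 = σ₂.2 := by rw [← hc1.2, ← hc2.2, he1]
    exact hne (Prod.ext he1 he2)
  -- assemble
  have hmain : ∑ _σ ∈ F, (q ^ m * (1 - q) ^ (n - m)) ≤ ∑ h ∈ E.powerset, wt h := by
    calc ∑ σ ∈ F, (q ^ m * (1 - q) ^ (n - m))
        = ∑ σ ∈ F, ∑ h ∈ cls σ, wt h := by
          apply Finset.sum_congr rfl
          intro σ hσ
          rw [hclass σ hσ]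
      _ = ∑ h ∈ F.biUnion cls, wt h := (Finset.sum_biUnion hdisj).symm
      _ ≤ ∑ h ∈ E.powerset, wt h := by
          apply Finset.sum_le_sum_of_subset_of_nonneg
          · intro h hh
            obtain ⟨σ, _, hσ2⟩ := Finset.mem_biUnion.1 hh
            exact (Finset.mem_filter.1 hσ2).1
          · intro h _ _
            exact hwt0 h
  rw [Finset.sum_const, nsmul_eq_mul] at hmain
  calc (F.card : ℝ) * (q ^ m * (1 - q) ^ (n - m)) ≤ ∑ h ∈ E.powerset, wt h := hmain
    _ = 1 := sum_pow_weight q E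

set_option maxHeartbeats 1000000 in
lemma pinsker_unit {p q : ℝ} (hp : 0 < p) (hp1 : p < 1) (hq : 0 < q) (hq1 : q < 1) :
    q * Real.log p + (1 - q) * Real.log (1 - p) + (p - q) ^ 2 / 2 ≤
      q * Real.log q + (1 - q) * Real.log (1 - q) := by
  set a := Real.sqrt p with hadef
  set b := Real.sqrt q with hbdef
  set c := Real.sqrt (1 - p) with hcdef
  set d := Real.sqrt (1 - q) with hddef
  have ha : 0 < a := Real.sqrt_pos.2 hp
  have hb : 0 < b := Real.sqrt_pos.2 hq
  have hc : 0 < c := Real.sqrt_pos.2 (by linarith)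
  have hd : 0 < d := Real.sqrt_pos.2 (by linarith)
  have ha2 : a ^ 2 = p := Real.sq_sqrt hp.le
  have hb2 : b ^ 2 = q := Real.sq_sqrt hq.le
  have hc2 : c ^ 2 = 1 - p := Real.sq_sqrt (by linarith)
  have hd2 : d ^ 2 = 1 - q := Real.sq_sqrt (by linarith)
  have ha1 : a ≤ 1 := Real.sqrt_le_one.mpr hp1.le
  have hb1 : b ≤ 1 := Real.sqrt_le_one.mpr hq1.le
  have hc1 : c ≤ 1 := Real.sqrt_le_one.mpr (by linarith)
  have hd1 : d ≤ 1 := Real.sqrt_le_one.mpr (by linarith)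
  have hlogp : Real.log p = 2 * Real.log a := by
    rw [← ha2, Real.log_pow]; push_cast; ring
  have hlogq : Real.log q = 2 * Real.log b := by
    rw [← hb2, Real.log_pow]; push_cast; ring
  have hlogc : Real.log (1 - p) = 2 * Real.log c := by
    rw [← hc2, Real.log_pow]; push_cast; ring
  have hlogd : Real.log (1 - q) = 2 * Real.log d := by
    rw [← hd2, Real.log_pow]; push_cast; ring
  have hconc := (strictConcaveOn_log_Ioi.concaveOn).2 (Set.mem_Ioi.2 (div_pos ha hb))
    (Set.mem_Ioi.2 (div_pos hc hd)) (show (0:ℝ) ≤ q from hq.le)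
    (show (0:ℝ) ≤ 1 - q by linarith) (show q + (1 - q) = 1 by ring)
  simp only [smul_eq_mul] at hconc
  have hqa : q * (a / b) = a * b := by
    rw [← hb2]; field_simp
  have hqc : (1 - q) * (c / d) = c * d := by
    rw [← hd2]; field_simp
  rw [hqa, hqc] at hconc
  rw [Real.log_div ha.ne' hb.ne', Real.log_div hc.ne' hd.ne'] at hconc
  have hs : 0 < a * b + c * d := by positivity
  have hlog1 : Real.log (a * b + c * d) ≤ (a * b + c * d) - 1 :=
    Real.log_le_sub_one_of_pos hs
  have hdom : a * b + c * d ≤ 1 - (p - q) ^ 2 / 4 := by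
    have hab : (p - q) ^ 2 ≤ 4 * (a - b) ^ 2 := by
      have hpq : p - q = a ^ 2 - b ^ 2 := by linarith
      have h1 : (p - q) ^ 2 = (a - b) ^ 2 * (a + b) ^ 2 := by rw [hpq]; ring
      have h2 : (a + b) ^ 2 ≤ 4 := by nlinarith
      rw [h1]
      nlinarith [sq_nonneg (a - b)]
    have hcd : (p - q) ^ 2 ≤ 4 * (c - d) ^ 2 := by
      have hpq : p - q = d ^ 2 - c ^ 2 := by linarith
      have h1 : (p - q) ^ 2 = (c - d) ^ 2 * (c + d) ^ 2 := by rw [hpq]; ring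
      have h2 : (c + d) ^ 2 ≤ 4 := by nlinarith
      rw [h1]
      nlinarith [sq_nonneg (c - d)]
    have e1 : (a - b) ^ 2 = a ^ 2 - 2 * (a * b) + b ^ 2 := by ring
    have e2 : (c - d) ^ 2 = c ^ 2 - 2 * (c * d) + d ^ 2 := by ring
    linarith
  rw [hlogp, hlogq, hlogc, hlogd]
  linarith [hconc, hlog1, hdom]

lemma pinsker_pow {p : ℝ} (hp0 : 0 ≤ p) (hp1 : p ≤ 1) (n m : ℕ) (hmn : m ≤ n) :
    p ^ m * (1 - p) ^ (n - m) ≤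
      Real.exp (-(n : ℝ) * (p - (m : ℝ) / n) ^ 2 / 2) *
        (((m : ℝ) / n) ^ m * (1 - (m : ℝ) / n) ^ (n - m)) := by
  rcases Nat.eq_zero_or_pos n with hn | hn
  · subst hn
    have hm : m = 0 := Nat.le_zero.1 hmn
    subst hm
    simp
  have hnR : (0 : ℝ) < n := by exact_mod_cast hn
  set q : ℝ := (m : ℝ) / n with hqdef
  have hq0 : 0 ≤ q := by positivity
  have hq1 : q ≤ 1 := by
    rw [hqdef, div_le_one hnR]; exact_mod_cast hmn
  rcases Nat.eq_zero_or_pos m with hm0 | hm0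
  · subst hm0
    have hq : q = 0 := by simp [hqdef]
    rw [hq]
    simp only [pow_zero, one_mul, Nat.sub_zero, sub_zero, Nat.cast_zero, one_pow, mul_one]
    have h1 : 1 - p ≤ Real.exp (-(p ^ 2 / 2)) := by
      have h2 : 1 - p ≤ Real.exp (-p) := by
        have := Real.add_one_le_exp (-p); linarith
      have h3 : Real.exp (-p) ≤ Real.exp (-(p ^ 2 / 2)) :=
        Real.exp_le_exp.2 (by nlinarith)
      linarith
    calc (1 - p) ^ n ≤ (Real.exp (-(p ^ 2 / 2))) ^ n :=
          pow_le_pow_left₀ (by linarith) h1 n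
      _ = Real.exp ((n : ℝ) * (-(p ^ 2 / 2))) := (Real.exp_nat_mul _ n).symm
      _ = Real.exp (-(n : ℝ) * p ^ 2 / 2) := by congr 1; ring
  rcases eq_or_lt_of_le hmn with hmn' | hmn'
  · subst hmn'
    have hq : q = 1 := by rw [hqdef]; exact div_self hnR.ne'
    rw [hq]
    simp only [Nat.sub_self, pow_zero, mul_one, sub_self, one_pow]
    have h1 : p ≤ Real.exp (-((1 - p) ^ 2 / 2)) := by
      have h2 : p ≤ Real.exp (p - 1) := by
        have := Real.add_one_le_exp (p - 1); linarith
      have h3 : Real.exp (p - 1) ≤ Real.exp (-((1 - p) ^ 2 / 2)) :=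
        Real.exp_le_exp.2 (by nlinarith)
      linarith
    calc p ^ m ≤ (Real.exp (-((1 - p) ^ 2 / 2))) ^ m := pow_le_pow_left₀ hp0 h1 m
      _ = Real.exp ((m : ℝ) * (-((1 - p) ^ 2 / 2))) := (Real.exp_nat_mul _ m).symm
      _ = Real.exp (-(m : ℝ) * (p - 1) ^ 2 / 2) := by congr 1; ring
  -- now 0 < m < n
  have hqpos : 0 < q := by
    rw [hqdef]
    apply div_pos _ hnR
    exact_mod_cast hm0
  have hqlt : q < 1 := by
    rw [hqdef, div_lt_one hnR]; exact_mod_cast hmn'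
  rcases hp0.eq_or_lt with hp | hp
  · rw [← hp, zero_pow (by omega : m ≠ 0), zero_mul]
    exact mul_nonneg (Real.exp_nonneg _) (mul_nonneg (pow_nonneg hqpos.le _)
      (pow_nonneg (by linarith) _))
  rcases hp1.eq_or_lt with hp' | hp'
  · rw [hp', sub_self, zero_pow (by omega : n - m ≠ 0), mul_zero]
    exact mul_nonneg (Real.exp_nonneg _) (mul_nonneg (pow_nonneg hqpos.le _)
      (pow_nonneg (by linarith) _))
  -- main case
  have hL : 0 < p ^ m * (1 - p) ^ (n - m) := by
    apply mul_pos (pow_pos hp m) (pow_pos (by linarith) _)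
  have hR : 0 < q ^ m * (1 - q) ^ (n - m) := by
    apply mul_pos (pow_pos hqpos m) (pow_pos (by linarith) _)
  rw [← Real.exp_log hL]
  have hrhs : Real.exp (-(n : ℝ) * (p - q) ^ 2 / 2) * (q ^ m * (1 - q) ^ (n - m)) =
      Real.exp (-(n : ℝ) * (p - q) ^ 2 / 2 + Real.log (q ^ m * (1 - q) ^ (n - m))) := by
    rw [Real.exp_add, Real.exp_log hR]
  rw [hrhs, Real.exp_le_exp]
  rw [Real.log_mul (pow_pos hp m).ne' (pow_pos (by linarith : (0:ℝ) < 1 - p) (n - m)).ne',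
    Real.log_mul (pow_pos hqpos m).ne' (pow_pos (by linarith : (0:ℝ) < 1 - q) (n - m)).ne',
    Real.log_pow, Real.log_pow, Real.log_pow, Real.log_pow]
  have hunit := pinsker_unit hp hp' hqpos hqlt
  have hmul := mul_le_mul_of_nonneg_left hunit hnR.le
  have hmcast : (m : ℝ) = q * n := by
    rw [hqdef]; field_simp
  have hnmcast : ((n - m : ℕ) : ℝ) = (1 - q) * n := by
    rw [Nat.cast_sub hmn, hqdef]; field_simp
  rw [hmcast, hnmcast]
  nlinarith [hmul]

lemma wq_pos {n m : ℕ} (hmn : m ≤ n) :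
    0 < ((m : ℝ) / n) ^ m * (1 - (m : ℝ) / n) ^ (n - m) := by
  rcases Nat.eq_zero_or_pos m with hm | hm
  · subst hm
    norm_num
  · have hn : 0 < n := lt_of_lt_of_le hm hmn
    have hnR : (0 : ℝ) < n := by exact_mod_cast hn
    have hq : 0 < (m : ℝ) / n := div_pos (by exact_mod_cast hm) hnR
    rcases eq_or_lt_of_le hmn with he | hlt
    · subst he
      have : (m : ℝ) / m = 1 := div_self hnR.ne'
      rw [this, Nat.sub_self, pow_zero, mul_one]
      exact pow_pos one_pos m
    · have h1 : (m : ℝ) / n < 1 := by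
        rw [div_lt_one hnR]; exact_mod_cast hlt
      exact mul_pos (pow_pos hq m) (pow_pos (by linarith) _)

lemma validSig_finite (G : SimpleGraph W) (v : W) (α p : ℝ) (n m : ℕ) :
    (ValidSig G v α p n m).Finite := by
  rcases le_or_gt m n with hmn | hnm
  · by_contra hinf
    have hinf' : (ValidSig G v α p n m).Infinite := hinf
    set w : ℝ := ((m : ℝ) / n) ^ m * (1 - (m : ℝ) / n) ^ (n - m) with hw
    have hwpos : 0 < w := wq_pos hmn
    obtain ⟨T, hTsub, hTfin, hTcard⟩ := hinf'.exists_subset_ncard_eq (⌈w⁻¹⌉₊ + 1)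
    have hq0 : 0 ≤ (m : ℝ) / n := by positivity
    have hq1 : (m : ℝ) / n ≤ 1 := by
      rcases Nat.eq_zero_or_pos n with hn | hn
      · subst hn
        have : m = 0 := Nat.le_zero.1 hmn
        subst this
        norm_num
      · rw [div_le_one (by exact_mod_cast hn)]; exact_mod_cast hmn
    have hpk := pack (G := G) (v := v) hq0 hq1 hTfin.toFinset
      (fun σ hσ => hTsub (hTfin.mem_toFinset.1 hσ))
    have hcard : (hTfin.toFinset.card : ℝ) = ((⌈w⁻¹⌉₊ + 1 : ℕ) : ℝ) := by
      rw [← Set.ncard_eq_toFinset_card T hTfin, hTcard]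
    rw [hcard, ← hw] at hpk
    have h2 : w⁻¹ < ((⌈w⁻¹⌉₊ + 1 : ℕ) : ℝ) := by
      push_cast
      have := Nat.le_ceil w⁻¹
      linarith
    have h4 : w⁻¹ * w < ((⌈w⁻¹⌉₊ + 1 : ℕ) : ℝ) * w := mul_lt_mul_of_pos_right h2 hwpos
    rw [inv_mul_cancel₀ hwpos.ne'] at h4
    linarith
  · convert Set.finite_empty
    ext σ
    simp only [ValidSig, Set.mem_setOf_eq, Set.mem_empty_iff_false, iff_false, not_and]
    intro hos _ h1 h2
    exfalso
    have := Finset.card_le_card hos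
    omega

lemma class_bound {α p : ℝ} (hα : 0 < α) (hp0 : 0 ≤ p) (hp1 : p ≤ 1)
    (G : SimpleGraph W) (v : W) (n m : ℕ) (hmn : m ≤ n) :
    ((ValidSig G v α p n m).ncard : ℝ) * (p ^ m * (1 - p) ^ (n - m)) ≤
      Real.exp (-(α ^ 2 / 2) * n) := by
  have hfin := validSig_finite G v α p n m
  set S := ValidSig G v α p n m with hS
  set N := S.ncard with hN
  have hq0 : 0 ≤ (m : ℝ) / n := by positivity
  have hq1 : (m : ℝ) / n ≤ 1 := by
    rcases Nat.eq_zero_or_pos n with hn | hn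
    · subst hn
      have : m = 0 := Nat.le_zero.1 hmn
      subst this
      norm_num
    · rw [div_le_one (by exact_mod_cast hn)]; exact_mod_cast hmn
  have hpack : (N : ℝ) * (((m : ℝ) / n) ^ m * (1 - (m : ℝ) / n) ^ (n - m)) ≤ 1 := by
    have hpk := pack (G := G) (v := v) hq0 hq1 hfin.toFinset
      (fun σ hσ => hfin.mem_toFinset.1 hσ)
    rwa [← Set.ncard_eq_toFinset_card S hfin] at hpk
  rcases Nat.eq_zero_or_pos n with hn | hn
  · subst hn
    have hm : m = 0 := Nat.le_zero.1 hmn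
    subst hm
    simp only [Nat.cast_zero, mul_zero, Real.exp_zero, pow_zero, mul_one, Nat.sub_zero] at hpack ⊢
    simpa using hpack
  rcases Nat.eq_zero_or_pos N with hN0 | hN0
  · rw [hN0]
    simp only [Nat.cast_zero, zero_mul]
    positivity
  obtain ⟨σ, hσ⟩ : S.Nonempty := Set.nonempty_of_ncard_ne_zero (by omega)
  obtain ⟨_, _, _, _, hcond, _⟩ := hσ
  have hnR : (0 : ℝ) < n := by exact_mod_cast hn
  set q : ℝ := (m : ℝ) / n with hqdef
  have hpq2 : α ^ 2 ≤ (p - q) ^ 2 := by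
    have hx : p * ((n : ℝ) - m) - (1 - p) * m = (p - q) * n := by
      rw [hqdef]; field_simp; ring
    rw [hx, abs_mul, abs_of_pos hnR] at hcond
    have habs : α ≤ |p - q| := le_of_mul_le_mul_right (by linarith) hnR
    calc α ^ 2 ≤ |p - q| ^ 2 := pow_le_pow_left₀ hα.le habs 2
      _ = (p - q) ^ 2 := sq_abs _
  have hpin := pinsker_pow hp0 hp1 n m hmn
  have hexp : Real.exp (-(n : ℝ) * (p - q) ^ 2 / 2) ≤ Real.exp (-(α ^ 2 / 2) * n) := by
    apply Real.exp_le_exp.2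
    have := mul_le_mul_of_nonneg_left hpq2 hnR.le
    nlinarith
  calc (N : ℝ) * (p ^ m * (1 - p) ^ (n - m))
      ≤ (N : ℝ) * (Real.exp (-(n : ℝ) * (p - q) ^ 2 / 2) * (q ^ m * (1 - q) ^ (n - m))) :=
        mul_le_mul_of_nonneg_left hpin (Nat.cast_nonneg N)
    _ = Real.exp (-(n : ℝ) * (p - q) ^ 2 / 2) * ((N : ℝ) * (q ^ m * (1 - q) ^ (n - m))) := by
        ring
    _ ≤ Real.exp (-(n : ℝ) * (p - q) ^ 2 / 2) * 1 :=
        mul_le_mul_of_nonneg_left hpack (Real.exp_nonneg _)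
    _ = Real.exp (-(n : ℝ) * (p - q) ^ 2 / 2) := mul_one _
    _ ≤ Real.exp (-(α ^ 2 / 2) * n) := hexp

/-- The cylinder event determined by a signature. -/
def cylSet (s o : Finset (Sym2 W)) : Set (Sym2 W → Bool) :=
  {ω | ∀ e ∈ s, ω e = indic o e}

lemma cylSet_measurable (s o : Finset (Sym2 W)) : MeasurableSet (cylSet s o) := by
  have : cylSet s o = ⋂ e ∈ s, {ω : Sym2 W → Bool | ω e = indic o e} := by
    ext ω
    simp [cylSet]
  rw [this]
  refine MeasurableSet.biInter s.countable_toSet (fun e _ => ?_)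
  have he : {ω : Sym2 W → Bool | ω e = indic o e} =
      (fun ω : Sym2 W → Bool => ω e) ⁻¹' {indic o e} := by
    ext ω
    simp [Set.mem_preimage]
  rw [he]
  exact measurable_pi_apply e (measurableSet_singleton _)

lemma stat_of_mem_cyl {s o : Finset (Sym2 W)} (hex : ∃ ω₀, Stat G v s o ω₀)
    {ω' : Sym2 W → Bool} (h : ω' ∈ cylSet s o) : Stat G v s o ω' := by
  obtain ⟨ω₀, h₀⟩ := hex
  apply stat_stab h₀
  intro e he
  rw [h e he]
  exact indic_eq_true_iff o e

lemma cyl_measure {p : ℝ} {μ : Measure (Sym2 W → Bool)} (hμ : IsBernoulli G p μ)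
    {s o : Finset (Sym2 W)} (hos : o ⊆ s) (hedge : ↑s ⊆ G.edgeSet) :
    μ (cylSet s o) = ENNReal.ofReal (p ^ o.card * (1 - p) ^ (s.card - o.card)) := by
  classical
  have h := hμ.2 s hedge (indic o)
  have hf1 : s.filter (fun e => indic o e = true) = o := by
    ext e
    simp only [Finset.mem_filter, indic_eq_true_iff]
    exact ⟨fun h => h.2, fun h => ⟨hos h, h⟩⟩
  have hf2 : s.filter (fun e => indic o e = false) = s \ o := by
    ext e
    simp only [Finset.mem_filter, indic_eq_false_iff, Finset.mem_sdiff]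
  rw [hf1, hf2, Finset.card_sdiff_of_subset hos] at h
  exact h

lemma integrand_bound {α p : ℝ} (hp0 : 0 ≤ p) (hp1 : p ≤ 1) (t : ℝ) {n m : ℕ}
    {σ : Finset (Sym2 W) × Finset (Sym2 W)} (hσ : σ ∈ ValidSig G v α p n m)
    {ω' : Sym2 W → Bool} (hω' : ω' ∈ cylSet σ.1 σ.2) :
    ENNReal.ofReal (|fluct G p ω' v| * Real.exp (t * ((clusterEdges G ω' v).ncard : ℝ)))
      ≤ ENNReal.ofReal ((n : ℝ) * Real.exp (t * n)) := by
  obtain ⟨hos, _, hc1, hc2, _, hex⟩ := hσ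
  have hst : Stat G v σ.1 σ.2 ω' := stat_of_mem_cyl hex hω'
  have hfl := fluct_stat hos hst p
  have hnc := ncard_stat hst
  have hmn : m ≤ n := by
    rw [← hc1, ← hc2]
    exact Finset.card_le_card hos
  have hmR : (m : ℝ) ≤ n := Nat.cast_le.2 hmn
  have hm0 : (0 : ℝ) ≤ m := Nat.cast_nonneg m
  have habs : |fluct G p ω' v| ≤ n := by
    rw [hfl, hc1, hc2]
    have e1 : 0 ≤ (1 - p) * m := mul_nonneg (by linarith) hm0
    have e2 : p * ((n : ℝ) - m) ≤ (n : ℝ) - m := by nlinarith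
    have e3 : 0 ≤ p * ((n : ℝ) - m) := mul_nonneg hp0 (by linarith)
    have e4 : (1 - p) * m ≤ m := by nlinarith
    rw [abs_le]
    constructor
    · linarith
    · linarith
  apply ENNReal.ofReal_le_ofReal
  rw [hnc, hc1]
  exact mul_le_mul_of_nonneg_right habs (Real.exp_nonneg _)

open Classical in
/-- The finite set of valid signatures with `n` cluster edges. -/
noncomputable def DnF (G : SimpleGraph W) (v : W) (α p : ℝ) (n : ℕ) :
    Finset (Finset (Sym2 W) × Finset (Sym2 W)) :=
  (Finset.range (n + 1)).biUnion (fun m => (validSig_finite G v α p n m).toFinset)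

lemma mem_DnF {α p : ℝ} {n : ℕ} {σ : Finset (Sym2 W) × Finset (Sym2 W)}
    (h : σ ∈ DnF G v α p n) : σ ∈ ValidSig G v α p n σ.2.card := by
  classical
  obtain ⟨m, _, hm⟩ := Finset.mem_biUnion.1 h
  have hv := (validSig_finite G v α p n m).mem_toFinset.1 hm
  have : σ.2.card = m := hv.2.2.2.1
  rwa [this]

lemma block_sum_bound {α p : ℝ} (hα : 0 < α) (hp0 : 0 ≤ p) (hp1 : p ≤ 1)
    (G : SimpleGraph W) (v : W) (n : ℕ) :
    ∑ σ ∈ DnF G v α p n, (p ^ σ.2.card * (1 - p) ^ (n - σ.2.card)) ≤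
      ((n : ℝ) + 1) * Real.exp (-(α ^ 2 / 2) * n) := by
  classical
  have hdisj : (↑(Finset.range (n + 1)) : Set ℕ).PairwiseDisjoint
      (fun m => (validSig_finite G v α p n m).toFinset) := by
    intro m1 _ m2 _ hne
    show Disjoint _ _
    rw [Finset.disjoint_left]
    intro σ h1 h2
    have e1 : σ.2.card = m1 := ((validSig_finite G v α p n m1).mem_toFinset.1 h1).2.2.2.1
    have e2 : σ.2.card = m2 := ((validSig_finite G v α p n m2).mem_toFinset.1 h2).2.2.2.1
    exact hne (e1 ▸ e2 ▸ rfl)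
  rw [DnF, Finset.sum_biUnion hdisj]
  calc ∑ m ∈ Finset.range (n + 1), ∑ σ ∈ (validSig_finite G v α p n m).toFinset,
        (p ^ σ.2.card * (1 - p) ^ (n - σ.2.card))
      ≤ ∑ m ∈ Finset.range (n + 1), Real.exp (-(α ^ 2 / 2) * n) := by
        apply Finset.sum_le_sum
        intro m hm
        have hmn : m ≤ n := Nat.lt_succ_iff.1 (Finset.mem_range.1 hm)
        have hconst : ∀ σ ∈ (validSig_finite G v α p n m).toFinset,
            (p ^ σ.2.card * (1 - p) ^ (n - σ.2.card)) = p ^ m * (1 - p) ^ (n - m) := by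
          intro σ hσ
          have : σ.2.card = m := ((validSig_finite G v α p n m).mem_toFinset.1 hσ).2.2.2.1
          rw [this]
        rw [Finset.sum_congr rfl hconst, Finset.sum_const, nsmul_eq_mul]
        have hcard : ((validSig_finite G v α p n m).toFinset.card : ℝ) =
            ((ValidSig G v α p n m).ncard : ℝ) := by
          rw [Set.ncard_eq_toFinset_card _ (validSig_finite G v α p n m)]
        rw [hcard]
        exact class_bound hα hp0 hp1 G v n m hmn
      _ = ((n : ℝ) + 1) * Real.exp (-(α ^ 2 / 2) * n) := by
        rw [Finset.sum_const, Finset.card_range, nsmul_eq_mul]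
        push_cast
        ring

lemma cyl_integral_bound {α p : ℝ} (hp0 : 0 ≤ p) (hp1 : p ≤ 1) (t : ℝ)
    {μ : Measure (Sym2 W → Bool)} (hμ : IsBernoulli G p μ) {n m : ℕ}
    {σ : Finset (Sym2 W) × Finset (Sym2 W)} (hσ : σ ∈ ValidSig G v α p n m) :
    ∫⁻ ω in cylSet σ.1 σ.2,
        ENNReal.ofReal (|fluct G p ω v| *
          Real.exp (t * ((clusterEdges G ω v).ncard : ℝ))) ∂μ
      ≤ ENNReal.ofReal (((n : ℝ) * Real.exp (t * n)) * (p ^ m * (1 - p) ^ (n - m))) := by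
  have hw0 : 0 ≤ p ^ m * (1 - p) ^ (n - m) :=
    mul_nonneg (pow_nonneg hp0 _) (pow_nonneg (by linarith) _)
  have hc0 : 0 ≤ (n : ℝ) * Real.exp (t * n) :=
    mul_nonneg (Nat.cast_nonneg n) (Real.exp_nonneg _)
  calc ∫⁻ ω in cylSet σ.1 σ.2,
        ENNReal.ofReal (|fluct G p ω v| *
          Real.exp (t * ((clusterEdges G ω v).ncard : ℝ))) ∂μ
      ≤ ∫⁻ _ω in cylSet σ.1 σ.2, ENNReal.ofReal ((n : ℝ) * Real.exp (t * n)) ∂μ := by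
        apply lintegral_mono_ae
        refine (ae_restrict_iff' (cylSet_measurable σ.1 σ.2)).2 (ae_of_all _ ?_)
        intro ω' hω'
        exact integrand_bound hp0 hp1 t hσ hω'
    _ = ENNReal.ofReal ((n : ℝ) * Real.exp (t * n)) * μ (cylSet σ.1 σ.2) :=
        setLIntegral_const _ _
    _ = ENNReal.ofReal ((n : ℝ) * Real.exp (t * n)) *
          ENNReal.ofReal (p ^ m * (1 - p) ^ (n - m)) := by
        rw [cyl_measure hμ hσ.1 hσ.2.1, hσ.2.2.1, hσ.2.2.2.1]
    _ = ENNReal.ofReal (((n : ℝ) * Real.exp (t * n)) * (p ^ m * (1 - p) ^ (n - m))) :=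
        (ENNReal.ofReal_mul hc0).symm

lemma mem_DnF_of {α p : ℝ} {n m : ℕ} (hmn : m ≤ n)
    {σ : Finset (Sym2 W) × Finset (Sym2 W)} (h : σ ∈ ValidSig G v α p n m) :
    σ ∈ DnF G v α p n := by
  classical
  unfold DnF
  exact Finset.mem_biUnion.2 ⟨m, Finset.mem_range.2 (Nat.lt_succ_of_le hmn),
    (validSig_finite G v α p n m).mem_toFinset.2 h⟩

end AuxPercolation

/-- **Proposition 2.2.**  Let `α > 0`.  Then
`E_p[|h_p(K_v)| e^{t E_v} 1(α E_v ≤ |h_p(K_v)| < ∞)] < ∞` for every locally finite graph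
`G`, every `v ∈ V`, every `p ∈ [0,1]` and every `0 ≤ t < α²/2`. -/
theorem fluctuation_exponential_moment
    (α : ℝ) (hα : 0 < α)
    {V : Type*} (G : SimpleGraph V)
    (hlf : ∀ u : V, (G.neighborSet u).Finite) (v : V)
    (p : ℝ) (hp0 : 0 ≤ p) (hp1 : p ≤ 1)
    (t : ℝ) (ht0 : 0 ≤ t) (ht1 : t < α ^ 2 / 2)
    (μ : Measure (Sym2 V → Bool)) (hμ : IsBernoulli G p μ) :
    ∫⁻ ω in {ω | (clusterEdges G ω v).Finite ∧
        α * ((clusterEdges G ω v).ncard : ℝ) ≤ |fluct G p ω v|},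
      ENNReal.ofReal (|fluct G p ω v| *
        Real.exp (t * ((clusterEdges G ω v).ncard : ℝ))) ∂μ < ⊤ := by
  classical
  -- covering of the event by cylinder sets
  have hcover : {ω : Sym2 V → Bool | (clusterEdges G ω v).Finite ∧
      α * ((clusterEdges G ω v).ncard : ℝ) ≤ |fluct G p ω v|} ⊆
      ⋃ (i : Σ n : ℕ, {σ // σ ∈ DnF G v α p n}), cylSet i.2.1.1 i.2.1.2 := by
    rintro ω ⟨hfin, hcond⟩
    set s : Finset (Sym2 V) := hfin.toFinset with hs
    set o : Finset (Sym2 V) := s.filter (fun e => ω e = true) with ho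
    have hos : o ⊆ s := Finset.filter_subset _ _
    have hstat : Stat G v s o ω := by
      constructor
      · rw [hs, Set.Finite.coe_toFinset]
      · intro e he
        rw [ho, Finset.mem_filter]
        exact ⟨fun h => ⟨he, h⟩, fun h => h.2⟩
    have hval : (s, o) ∈ ValidSig G v α p s.card o.card := by
      refine ⟨hos, ?_, rfl, rfl, ?_, ω, hstat⟩
      · rw [hs, Set.Finite.coe_toFinset]
        exact fun e he => he.1
      · rw [← fluct_stat hos hstat p, ← ncard_stat hstat]
        exact hcond
    refine Set.mem_iUnion.2
      ⟨⟨s.card, ⟨(s, o), mem_DnF_of (Finset.card_le_card hos) hval⟩⟩, ?_⟩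
    intro e he
    rw [Bool.eq_iff_iff, indic_eq_true_iff]
    exact hstat.2 e he
  -- summability of the dominating series
  have hgpos : ∀ n : ℕ, 0 ≤ ((n : ℝ) ^ 2 + n) * Real.exp ((t - α ^ 2 / 2) * n) :=
    fun n => by positivity
  have hr : ‖Real.exp (t - α ^ 2 / 2)‖ < 1 := by
    rw [Real.norm_eq_abs, abs_of_pos (Real.exp_pos _)]
    exact Real.exp_lt_one_iff.2 (by linarith)
  have hsum : Summable (fun n : ℕ => ((n : ℝ) ^ 2 + n) * Real.exp ((t - α ^ 2 / 2) * n)) := by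
    have h2 := summable_pow_mul_geometric_of_norm_lt_one 2 hr
    have h1 := summable_pow_mul_geometric_of_norm_lt_one 1 hr
    apply (h2.add h1).congr
    intro n
    rw [show (t - α ^ 2 / 2) * (n : ℝ) = (n : ℝ) * (t - α ^ 2 / 2) by ring,
      Real.exp_nat_mul]
    ring
  -- the block bound
  have hblock : ∀ n : ℕ, ∑ σ ∈ DnF G v α p n,
      ∫⁻ ω in cylSet σ.1 σ.2, ENNReal.ofReal (|fluct G p ω v| *
        Real.exp (t * ((clusterEdges G ω v).ncard : ℝ))) ∂μ
      ≤ ENNReal.ofReal (((n : ℝ) ^ 2 + n) * Real.exp ((t - α ^ 2 / 2) * n)) := by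
    intro n
    have hcn : 0 ≤ (n : ℝ) * Real.exp (t * n) := by positivity
    calc ∑ σ ∈ DnF G v α p n,
        ∫⁻ ω in cylSet σ.1 σ.2, ENNReal.ofReal (|fluct G p ω v| *
          Real.exp (t * ((clusterEdges G ω v).ncard : ℝ))) ∂μ
        ≤ ∑ σ ∈ DnF G v α p n, ENNReal.ofReal (((n : ℝ) * Real.exp (t * n)) *
            (p ^ σ.2.card * (1 - p) ^ (n - σ.2.card))) := by
          apply Finset.sum_le_sum
          intro σ hσ
          exact cyl_integral_bound hp0 hp1 t hμ (mem_DnF hσ)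
      _ = ENNReal.ofReal (∑ σ ∈ DnF G v α p n, ((n : ℝ) * Real.exp (t * n)) *
            (p ^ σ.2.card * (1 - p) ^ (n - σ.2.card))) := by
          rw [ENNReal.ofReal_sum_of_nonneg]
          intro σ _
          have hw : 0 ≤ p ^ σ.2.card * (1 - p) ^ (n - σ.2.card) :=
            mul_nonneg (pow_nonneg hp0 _) (pow_nonneg (by linarith) _)
          exact mul_nonneg hcn hw
      _ ≤ ENNReal.ofReal (((n : ℝ) ^ 2 + n) * Real.exp ((t - α ^ 2 / 2) * n)) := by
          apply ENNReal.ofReal_le_ofReal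
          rw [← Finset.mul_sum]
          calc ((n : ℝ) * Real.exp (t * n)) *
              ∑ σ ∈ DnF G v α p n, (p ^ σ.2.card * (1 - p) ^ (n - σ.2.card))
              ≤ ((n : ℝ) * Real.exp (t * n)) *
                (((n : ℝ) + 1) * Real.exp (-(α ^ 2 / 2) * n)) :=
                mul_le_mul_of_nonneg_left (block_sum_bound hα hp0 hp1 G v n) hcn
            _ = ((n : ℝ) ^ 2 + n) * (Real.exp (t * n) * Real.exp (-(α ^ 2 / 2) * n)) := by
                ring
            _ = ((n : ℝ) ^ 2 + n) * Real.exp ((t - α ^ 2 / 2) * n) := by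
                rw [← Real.exp_add]
                congr 2
                ring
  -- assemble
  calc ∫⁻ ω in {ω | (clusterEdges G ω v).Finite ∧
        α * ((clusterEdges G ω v).ncard : ℝ) ≤ |fluct G p ω v|},
      ENNReal.ofReal (|fluct G p ω v| *
        Real.exp (t * ((clusterEdges G ω v).ncard : ℝ))) ∂μ
      ≤ ∫⁻ ω in ⋃ (i : Σ n : ℕ, {σ // σ ∈ DnF G v α p n}), cylSet i.2.1.1 i.2.1.2,
          ENNReal.ofReal (|fluct G p ω v| *
            Real.exp (t * ((clusterEdges G ω v).ncard : ℝ))) ∂μ :=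
        lintegral_mono_set hcover
    _ ≤ ∑' (i : Σ n : ℕ, {σ // σ ∈ DnF G v α p n}),
          ∫⁻ ω in cylSet i.2.1.1 i.2.1.2, ENNReal.ofReal (|fluct G p ω v| *
            Real.exp (t * ((clusterEdges G ω v).ncard : ℝ))) ∂μ :=
        lintegral_iUnion_le _ _
    _ = ∑' (n : ℕ), ∑' (σ : {σ // σ ∈ DnF G v α p n}),
          ∫⁻ ω in cylSet σ.1.1 σ.1.2, ENNReal.ofReal (|fluct G p ω v| *
            Real.exp (t * ((clusterEdges G ω v).ncard : ℝ))) ∂μ :=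
        ENNReal.tsum_sigma' _
    _ = ∑' (n : ℕ), ∑ σ ∈ DnF G v α p n,
          ∫⁻ ω in cylSet σ.1 σ.2, ENNReal.ofReal (|fluct G p ω v| *
            Real.exp (t * ((clusterEdges G ω v).ncard : ℝ))) ∂μ :=
        tsum_congr (fun n => Finset.tsum_subtype (DnF G v α p n)
          (fun σ => ∫⁻ ω in cylSet σ.1 σ.2, ENNReal.ofReal (|fluct G p ω v| *
            Real.exp (t * ((clusterEdges G ω v).ncard : ℝ))) ∂μ))
    _ ≤ ∑' (n : ℕ), ENNReal.ofReal (((n : ℝ) ^ 2 + n) * Real.exp ((t - α ^ 2 / 2) * n)) :=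
        ENNReal.tsum_le_tsum hblock
    _ = ENNReal.ofReal (∑' (n : ℕ), ((n : ℝ) ^ 2 + n) * Real.exp ((t - α ^ 2 / 2) * n)) :=
        (ENNReal.ofReal_tsum_of_nonneg hgpos hsum).symm
    _ < ⊤ := ENNReal.ofReal_lt_top


end Percolation
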